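/- Let b be a unit of R = ℤ/p^kℤ and let m be a natural number with m < p^k. Then the function x ↦ φ_m(b·x) − b̄^m·φ_m(x) lies in Ω_{m−1}, where b̄ ∈ ℤ/pℤ denotes the reduction of b modulo p. -/
import Mathlib

def phi (p k m : ℕ) (x : ZMod (p ^ k)) : ZMod p := (x.val.choose m : ZMod p)

namespace Stmt13

variable (p k : ℕ) [Fact p.Prime]

noncomputable def Db (c : ZMod (p ^ k)) : Module.End (ZMod p) (ZMod (p ^ k) → ZMod p) where
  toFun f := fun x => f (x + c) - f x
  map_add' f g := by funext x; simp [Pi.add_apply]; ring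
  map_smul' r f := by funext x; simp [Pi.smul_apply, smul_eq_mul, mul_sub]

lemma Db_apply (c : ZMod (p ^ k)) (f : ZMod (p ^ k) → ZMod p) (x : ZMod (p ^ k)) :
    Db p k c f x = f (x + c) - f x := rfl

lemma NZ : NeZero (p ^ k) := ⟨pow_ne_zero k (Fact.out : p.Prime).ne_zero⟩

lemma chooseA {m : ℕ} (hm : m < p ^ k) (n : ℕ) :
    (((p ^ k + n).choose m : ℕ) : ZMod p) = (n.choose m : ZMod p) := by
  rw [Nat.add_choose_eq]
  push_cast
  rw [Finset.Nat.sum_antidiagonal_eq_sum_range_succ_mk]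
  rw [Finset.sum_eq_single 0]
  · simp
  · intro i hi hi0
    have h1 : ((p ^ k).choose i : ZMod p) = 0 := by
      rw [ZMod.natCast_eq_zero_iff]
      exact (Fact.out : p.Prime).dvd_choose_pow hi0
        (by rintro rfl; exact absurd (Finset.mem_range.mp hi) (by omega))
    rw [h1, zero_mul]
  · intro h; exact absurd (Finset.mem_range.mpr (Nat.succ_pos m)) h

lemma phi_add {m : ℕ} (hm : m < p ^ k) (c x : ZMod (p ^ k)) :
    phi p k m (x + c) =
      ∑ j ∈ Finset.range (m + 1), (c.val.choose j : ZMod p) * phi p k (m - j) x := by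
  haveI := NZ p k
  have key : (((x + c).val.choose m : ℕ) : ZMod p) = (((c.val + x.val).choose m : ℕ) : ZMod p) := by
    rw [ZMod.val_add]
    rcases lt_or_ge (x.val + c.val) (p ^ k) with h | h
    · rw [Nat.mod_eq_of_lt h, add_comm]
    · have hx := ZMod.val_lt x
      have hc := ZMod.val_lt c
      have h2 : (x.val + c.val) % p ^ k = x.val + c.val - p ^ k := by
        rw [Nat.mod_eq_sub_mod h, Nat.mod_eq_of_lt (by omega)]
      rw [h2]
      have h3 : c.val + x.val = p ^ k + (x.val + c.val - p ^ k) := by omega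
      rw [h3, chooseA p k hm]
  unfold phi
  rw [key, Nat.add_choose_eq]
  push_cast
  rw [Finset.Nat.sum_antidiagonal_eq_sum_range_succ_mk]

lemma Db_phi {m : ℕ} (hm : m < p ^ k) (c : ZMod (p ^ k)) :
    Db p k c (phi p k m) =
      ∑ i ∈ Finset.range m, (c.val.choose (i + 1) : ZMod p) • phi p k (m - (i + 1)) := by
  funext x
  rw [Db_apply, phi_add p k hm c x, Finset.sum_range_succ']
  simp [phi]

lemma Db_pow_zero {m : ℕ} (hm : m < p ^ k) (c : ZMod (p ^ k)) :
    (Db p k c ^ (m + 1)) (phi p k m) = 0 := by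
  induction m using Nat.strong_induction_on with
  | _ m ih =>
    rw [pow_succ, Module.End.mul_apply, Db_phi p k hm c, map_sum]
    refine Finset.sum_eq_zero fun i hi => ?_
    have hi' : i < m := Finset.mem_range.mp hi
    rw [map_smul]
    set j := m - (i + 1) with hj
    rw [show m = i + (j + 1) by omega, pow_add, Module.End.mul_apply,
      ih j (by omega) (by omega), map_zero, smul_zero]

lemma Db_pow_self {m : ℕ} (hm : m < p ^ k) (c : ZMod (p ^ k)) :
    (Db p k c ^ m) (phi p k m) = fun _ => ((c.val : ZMod p)) ^ m := by
  induction m with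
  | zero => funext x; simp [phi]
  | succ m ih =>
    rw [pow_succ, Module.End.mul_apply, Db_phi p k hm c, map_sum, Finset.sum_range_succ']
    have hz : ∀ i ∈ Finset.range m,
        ((Db p k c ^ m) ((c.val.choose (i + 1 + 1) : ZMod p) • phi p k (m + 1 - (i + 1 + 1)))) = 0 := by
      intro i hi
      have hi' : i < m := Finset.mem_range.mp hi
      have he : m + 1 - (i + 1 + 1) = m - (i + 1) := by omega
      rw [map_smul, he]
      set j := m - (i + 1) with hj
      rw [show m = i + (j + 1) by omega, pow_add, Module.End.mul_apply,
        Db_pow_zero p k (by omega) c, map_zero, smul_zero]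
    rw [Finset.sum_congr rfl hz]
    have h01 : m + 1 - (0 + 1) = m := by omega
    rw [h01, map_smul, ih (by omega)]
    funext x
    simp [Nat.choose_one_right, pow_succ]
    ring

lemma eq_const (f : ZMod (p ^ k) → ZMod p) (h : Db p k 1 f = 0) (x : ZMod (p ^ k)) :
    f x = f 0 := by
  haveI := NZ p k
  have step : ∀ y : ZMod (p ^ k), f (y + 1) = f y := by
    intro y
    have := congrFun h y
    rw [Db_apply] at this
    simpa [sub_eq_zero] using this
  have key : ∀ n : ℕ, f (n : ZMod (p ^ k)) = f 0 := by
    intro n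
    induction n with
    | zero => simp
    | succ n ih => rw [Nat.cast_succ, step, ih]
  obtain ⟨n, rfl⟩ := ZMod.natCast_rightInverse.surjective x
  exact key n

lemma ker_span (hk : 1 ≤ k) :
    ∀ m, m ≤ p ^ k → ∀ f : ZMod (p ^ k) → ZMod p, (Db p k 1 ^ m) f = 0 →
      f ∈ Submodule.span (ZMod p) {g : ZMod (p ^ k) → ZMod p | ∃ i < m, g = phi p k i} := by
  haveI := NZ p k
  haveI : Fact (1 < p ^ k) :=
    ⟨lt_of_lt_of_le (Fact.out : p.Prime).one_lt (Nat.le_self_pow (by omega) p)⟩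
  have hval1 : (1 : ZMod (p ^ k)).val = 1 := ZMod.val_one _
  intro m
  induction m with
  | zero => intro _ f hf; rw [pow_zero] at hf; simp [Module.End.one_apply] at hf; simp [hf]
  | succ m ih =>
    intro hm f hf
    rw [pow_succ, Module.End.mul_apply] at hf
    have h1 : Db p k 1 f ∈ Submodule.span (ZMod p)
        {g : ZMod (p ^ k) → ZMod p | ∃ i < m, g = phi p k i} := ih (by omega) _ hf
    -- find a primitive g in span of {phi i | i < m+1}
    have h2 : ∃ g ∈ Submodule.span (ZMod p)
        {g : ZMod (p ^ k) → ZMod p | ∃ i < m + 1, g = phi p k i}, Db p k 1 g = Db p k 1 f := by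
      refine Submodule.span_induction ?_ ?_ ?_ ?_ h1
      · rintro _ ⟨i, hi, rfl⟩
        refine ⟨phi p k (i + 1), Submodule.subset_span ⟨i + 1, by omega, rfl⟩, ?_⟩
        rw [Db_phi p k (by omega) 1, Finset.sum_range_succ']
        have : ∀ j ∈ Finset.range i,
            ((1 : ZMod (p ^ k)).val.choose (j + 1 + 1) : ZMod p) • phi p k (i + 1 - (j + 1 + 1)) = 0 := by
          intro j hj
          rw [hval1, Nat.choose_eq_zero_of_lt (by omega)]
          simp
        rw [Finset.sum_congr rfl this]
        simp [hval1]
      · exact ⟨0, Submodule.zero_mem _, map_zero _⟩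
      · rintro a b _ _ ⟨ga, hga, hga'⟩ ⟨gb, hgb, hgb'⟩
        exact ⟨ga + gb, Submodule.add_mem _ hga hgb, by rw [map_add, hga', hgb']⟩
      · rintro r a _ ⟨ga, hga, hga'⟩
        exact ⟨r • ga, Submodule.smul_mem _ r hga, by rw [map_smul, hga']⟩
    obtain ⟨g, hg, hg'⟩ := h2
    have hconst : ∀ x, (f - g) x = (f - g) 0 :=
      eq_const p k (f - g) (by rw [map_sub, hg', sub_self]) 
    have hphi0 : phi p k 0 = fun _ => (1 : ZMod p) := by funext x; simp [phi]
    have : f = (f - g) 0 • phi p k 0 + g := by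
      funext x
      have := hconst x
      simp only [Pi.sub_apply] at this
      simp [hphi0, Pi.add_apply, Pi.smul_apply]
      linear_combination this
    rw [this]
    exact Submodule.add_mem _
      (Submodule.smul_mem _ _ (Submodule.subset_span ⟨0, by omega, rfl⟩)) hg

lemma comp_pow (b : ZMod (p ^ k)) (g : ZMod (p ^ k) → ZMod p) :
    ∀ m, (Db p k 1 ^ m) (fun x => g (b * x)) = fun x => ((Db p k b ^ m) g) (b * x) := by
  intro m
  induction m with
  | zero => simp [Module.End.one_apply]
  | succ m ih =>
    rw [pow_succ', Module.End.mul_apply, ih]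
    funext x
    simp only [Db_apply, pow_succ', Module.End.mul_apply, mul_add, mul_one]

end Stmt13

/-- For `b` a unit of `R = ℤ/p^kℤ` and `m < p^k`, the function
`x ↦ φ_m(b·x) − b̄^m·φ_m(x)` lies in `Ω_{m−1}`, where `b̄` is `b` reduced mod `p`. -/
theorem stmt_13 (p k m : ℕ) [Fact p.Prime] (hk : 1 ≤ k) (hm : m < p ^ k)
    (b : ZMod (p ^ k)) (hb : IsUnit b) :
    (fun x => phi p k m (b * x) -
        (ZMod.castHom (dvd_pow_self p (Nat.one_le_iff_ne_zero.mp hk)) (ZMod p) b) ^ m *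
          phi p k m x)
      ∈ Submodule.span (ZMod p)
        {g : ZMod (p ^ k) → ZMod p | ∃ i < m, g = phi p k i} := by
  haveI := Stmt13.NZ p k
  haveI : Fact (1 < p ^ k) :=
    ⟨lt_of_lt_of_le (Fact.out : p.Prime).one_lt (Nat.le_self_pow (by omega) p)⟩
  set bb : ZMod p := ZMod.castHom (dvd_pow_self p (Nat.one_le_iff_ne_zero.mp hk)) (ZMod p) b with hbb
  have hbval : bb = (b.val : ZMod p) := by
    rw [hbb, ZMod.castHom_apply, ZMod.natCast_val]
  have hfeq : (fun x => phi p k m (b * x) - bb ^ m * phi p k m x)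
      = (fun x => phi p k m (b * x)) - (bb ^ m) • phi p k m := by
    funext x; simp [Pi.sub_apply, Pi.smul_apply, smul_eq_mul]
  rw [hfeq]
  apply Stmt13.ker_span p k hk m (le_of_lt hm)
  rw [map_sub, map_smul, Stmt13.comp_pow, Stmt13.Db_pow_self p k hm b,
    Stmt13.Db_pow_self p k hm 1]
  funext x
  simp [ZMod.val_one, hbval]
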